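/- Let X be a noncompact generalized continuum. Then the one-point (Alexandroff) compactification of X is connected. Moreover, if (Kᵢ) is an efficient compact exhaustion of X, the sets A(X) \ Kᵢ form a neighborhood basis of the point at infinity consisting of connected open sets. -/

import Mathlib

open OnePoint

/-- For a noncompact generalized continuum X, the one-point compactification is
connected, and given an efficient compact exhaustion (Kᵢ), the complements of the
Kᵢ in A(X) form a neighborhood basis of ∞ consisting of connected open sets. -/
theorem stmt14 {X : Type*} [TopologicalSpace X] [T2Space X] [ConnectedSpace X]
    [LocallyConnectedSpace X] [LocallyCompactSpace X] [SigmaCompactSpace X]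
    [NoncompactSpace X]
    (K : ℕ → Set X) (hcpt : ∀ i, IsCompact (K i)) (hmono : ∀ i, K i ⊆ K (i + 1))
    (hcover : (⋃ i, K i) = Set.univ) (hint : ∀ i, K i ⊆ interior (K (i + 1)))
    (hconn : ∀ i, IsConnected (K i))
    (heff : ∀ i, ∀ x ∈ (K i)ᶜ, ¬ IsCompact (closure (connectedComponentIn (K i)ᶜ x))) :
    ConnectedSpace (OnePoint X) ∧
      (∀ i, IsOpen (((↑) '' K i : Set (OnePoint X))ᶜ) ∧
        IsConnected (((↑) '' K i : Set (OnePoint X))ᶜ)) ∧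
      (nhds (∞ : OnePoint X)).HasBasis (fun _ : ℕ => True)
        (fun i => ((↑) '' K i : Set (OnePoint X))ᶜ) := by
  have hKc : ∀ i, IsClosed (K i) := fun i => (hcpt i).isClosed
  have hM : Monotone K := monotone_nat_of_le_succ hmono
  -- every compact set is absorbed by some `K i`
  have habs : ∀ s : Set X, IsCompact s → ∃ i, s ⊆ K i := by
    intro s hs
    have hsub : s ⊆ ⋃ i, interior (K (i + 1)) := by
      intro x _
      have hx : x ∈ ⋃ i, K i := hcover ▸ Set.mem_univ x
      obtain ⟨i, hi⟩ := Set.mem_iUnion.1 hx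
      exact Set.mem_iUnion.2 ⟨i, hint i hi⟩
    obtain ⟨t, ht⟩ := hs.elim_finite_subcover (fun i => interior (K (i + 1)))
      (fun _ => isOpen_interior) hsub
    obtain ⟨N, hN⟩ := t.exists_le
    refine ⟨N + 1, fun x hx => ?_⟩
    obtain ⟨i, hit, hxi⟩ := Set.mem_iUnion₂.1 (ht hx)
    exact hM (Nat.succ_le_succ (hN i hit)) (interior_subset hxi)
  -- each `(K i)ᶜ` is nonempty
  have hne : ∀ i, ((K i)ᶜ : Set X).Nonempty := by
    intro i
    rw [Set.nonempty_compl]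
    intro h
    exact NoncompactSpace.noncompact_univ (h ▸ hcpt i)
  -- ∞ is in the closure of every unbounded component
  have hcl : ∀ i, ∀ x ∈ (K i)ᶜ,
      (∞ : OnePoint X) ∈ closure ((↑) '' connectedComponentIn (K i)ᶜ x) := by
    intro i x hx
    rw [mem_closure_iff_nhds_basis OnePoint.hasBasis_nhds_infty]
    rintro s ⟨hsc, hscpt⟩
    have : ¬ connectedComponentIn (K i)ᶜ x ⊆ s := by
      intro hsub
      exact heff i x hx (hscpt.of_isClosed_subset isClosed_closure
        (closure_minimal hsub hsc))
    obtain ⟨z, hzC, hzs⟩ := Set.not_subset.1 this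
    exact ⟨(z : OnePoint X), Set.mem_image_of_mem _ hzC,
      Set.mem_union_left _ (Set.mem_image_of_mem _ hzs)⟩
  -- connectedness of the complements
  have hopen : ∀ i, IsOpen (((↑) '' K i : Set (OnePoint X))ᶜ) :=
    fun i => OnePoint.isOpen_compl_image_coe.2 ⟨hKc i, hcpt i⟩
  have hSconn : ∀ i, IsConnected (((↑) '' K i : Set (OnePoint X))ᶜ) := by
    intro i
    have hinf : (∞ : OnePoint X) ∈ ((↑) '' K i : Set (OnePoint X))ᶜ :=
      OnePoint.infty_notMem_image_coe
    refine ⟨⟨∞, hinf⟩, ?_⟩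
    have hEq : (((↑) '' K i : Set (OnePoint X))ᶜ) =
        ⋃ x : ((K i)ᶜ : Set X),
          ({∞} ∪ (↑) '' connectedComponentIn (K i)ᶜ (x : X)) := by
      rw [OnePoint.compl_image_coe]
      apply Set.Subset.antisymm
      · rintro y (⟨z, hz, rfl⟩ | hy)
        · exact Set.mem_iUnion.2 ⟨⟨z, hz⟩, Set.mem_union_right _
            (Set.mem_image_of_mem _ (mem_connectedComponentIn hz))⟩
        · obtain ⟨x, hx⟩ := hne i
          exact Set.mem_iUnion.2 ⟨⟨x, hx⟩, Set.mem_union_left _ hy⟩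
      · intro y hy
        obtain ⟨x, hx⟩ := Set.mem_iUnion.1 hy
        rcases hx with hx | ⟨z, hz, rfl⟩
        · exact Set.mem_union_right _ hx
        · exact Set.mem_union_left _
            (Set.mem_image_of_mem _ (connectedComponentIn_subset _ _ hz))
    rw [hEq]
    apply isPreconnected_iUnion
    · exact ⟨∞, Set.mem_iInter.2 fun x => Set.mem_union_left _ rfl⟩
    · rintro ⟨x, hx⟩
      have hC : IsConnected (connectedComponentIn (K i)ᶜ x) :=
        isConnected_connectedComponentIn_iff.2 hx
      have hCi : IsPreconnected ((↑) '' connectedComponentIn (K i)ᶜ x :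
          Set (OnePoint X)) :=
        (hC.image _ OnePoint.continuous_coe.continuousOn).isPreconnected
      refine hCi.subset_closure Set.subset_union_right ?_
      refine Set.union_subset ?_ subset_closure
      exact Set.singleton_subset_iff.2 (hcl i x hx)
  refine ⟨inferInstance, fun i => ⟨hopen i, hSconn i⟩, ?_⟩
  rw [Filter.hasBasis_iff]
  intro t
  constructor
  · intro ht
    obtain ⟨s, ⟨hsc, hscpt⟩, hst⟩ := OnePoint.hasBasis_nhds_infty.mem_iff.1 ht
    obtain ⟨i, hsi⟩ := habs s hscpt
    refine ⟨i, trivial, ?_⟩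
    rw [OnePoint.compl_image_coe]
    refine Set.Subset.trans ?_ hst
    exact Set.union_subset_union_left _
      (Set.image_mono (Set.compl_subset_compl.2 hsi))
  · rintro ⟨i, -, hsub⟩
    exact Filter.mem_of_superset
      ((hopen i).mem_nhds OnePoint.infty_notMem_image_coe) hsub
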